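/- Let n ≥ 1, m ≥ 1, μ > 0, γ > 0, M₁ > 0, and T > 0. Let s₀,…,s_{m−1} ∈ ℝⁿ be nonzero vectors and ŷ₀,…,ŷ_{m−1} ∈ ℝⁿ satisfy s_lᵀ ŷ_l ≥ (M₁ + μ)‖s_l‖² for each l. Define B⁽⁰⁾ = (1/γ + μ) I and B⁽ˡ⁺¹⁾ = B⁽ˡ⁾ − (B⁽ˡ⁾ s_l)(B⁽ˡ⁾ s_l)ᵀ/(s_lᵀ B⁽ˡ⁾ s_l) + ŷ_l ŷ_lᵀ/(s_lᵀ ŷ_l) for l = 0,…,m−1. Assume the largest eigenvalue of each B⁽ˡ⁾ (l = 0,…,m−1) is at most T. Then det(B⁽ᵐ⁾) ≥ (1/γ + μ)ⁿ · ((M₁ + μ)/T)ᵐ. -/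

import Mathlib

open scoped RealInnerProductSpace
open Matrix

open Matrix in
private lemma vecMulVec_mulVec' {n : ℕ} (u v x : Fin n → ℝ) :
    vecMulVec u v *ᵥ x = (v ⬝ᵥ x) • u := by
  ext i
  simp only [Matrix.mulVec, dotProduct, vecMulVec_apply, Pi.smul_apply, smul_eq_mul,
    Finset.sum_mul]
  exact Finset.sum_congr rfl fun j _ => by ring

open Matrix in
private lemma dot_vecMulVec_dot {n : ℕ} (u : Fin n → ℝ) (x : Fin n → ℝ) :
    x ⬝ᵥ (vecMulVec u u *ᵥ x) = (u ⬝ᵥ x) ^ 2 := by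
  rw [vecMulVec_mulVec', dotProduct_smul, smul_eq_mul, dotProduct_comm]
  ring

open Matrix in
private lemma det_bfgs_update {n : ℕ} (B : Matrix (Fin n) (Fin n) ℝ) (hB : Bᵀ = B)
    (hdet : IsUnit B.det) (s y : Fin n → ℝ)
    (ha : s ⬝ᵥ B *ᵥ s ≠ 0) (hb : s ⬝ᵥ y ≠ 0) :
    (B - (s ⬝ᵥ B *ᵥ s)⁻¹ • vecMulVec (B *ᵥ s) (B *ᵥ s) + (s ⬝ᵥ y)⁻¹ • vecMulVec y y).det
      = B.det * ((s ⬝ᵥ y) / (s ⬝ᵥ B *ᵥ s)) := by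
  set a := s ⬝ᵥ B *ᵥ s with ha'
  set b := s ⬝ᵥ y with hb'
  set U : Matrix (Fin n) (Fin 2) ℝ := fun i j => if j = 0 then (B *ᵥ s) i else y i with hU
  set V : Matrix (Fin 2) (Fin n) ℝ :=
    fun j i => if j = 0 then -a⁻¹ * (B *ᵥ s) i else b⁻¹ * y i with hV
  have hUV : B - a⁻¹ • vecMulVec (B *ᵥ s) (B *ᵥ s) + b⁻¹ • vecMulVec y y = B + U * V := by
    ext i j
    simp only [Matrix.add_apply, Matrix.mul_apply]
    simp [hU, hV, Matrix.mul_apply, Fin.sum_univ_two, vecMulVec_apply, Matrix.sub_apply,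
      Matrix.add_apply, Matrix.smul_apply, smul_eq_mul]
    ring
  have key : B⁻¹ *ᵥ (B *ᵥ s) = s := by
    rw [mulVec_mulVec, nonsing_inv_mul _ hdet, one_mulVec]
  have hBinvU : B⁻¹ * U = fun i j => if j = 0 then s i else (B⁻¹ *ᵥ y) i := by
    ext i j
    show ∑ k, B⁻¹ i k * U k j = _
    by_cases hj : j = 0
    · subst hj
      simp only [hU, if_pos rfl]
      conv_rhs => rw [← key]
      rfl
    · simp only [hU, hj, if_neg hj]
      rfl
  have h1 : (B *ᵥ s) ⬝ᵥ s = a := dotProduct_comm _ _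
  have h2 : (B *ᵥ s) ⬝ᵥ (B⁻¹ *ᵥ y) = b := by
    rw [dotProduct_comm, dotProduct_mulVec, ← mulVec_transpose, hB, mulVec_mulVec,
      mul_nonsing_inv _ hdet, one_mulVec, dotProduct_comm]
  have h3 : y ⬝ᵥ s = b := dotProduct_comm _ _
  set c := y ⬝ᵥ (B⁻¹ *ᵥ y) with hc
  have hVW : V * (B⁻¹ * U) = !![-a⁻¹ * a, -a⁻¹ * b; b⁻¹ * b, b⁻¹ * c] := by
    rw [hBinvU]
    ext j k
    show ∑ i, V j i * _ = _
    fin_cases j <;> fin_cases k <;>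
      simp only [hV, Fin.isValue, if_true, if_pos, if_neg, Matrix.cons_val', Matrix.cons_val_zero,
        Matrix.cons_val_one, Matrix.head_cons, Matrix.head_fin_const, Matrix.of_apply,
        Matrix.empty_val', Matrix.cons_val_fin_one] <;>
      [ (rw [← h1]); (rw [← h2]); (rw [← h3]); (rw [hc])] <;>
      simp [dotProduct, Finset.mul_sum, mul_assoc]
  have step1 : B + U * V = B * (1 + B⁻¹ * (U * V)) := by
    rw [mul_add, mul_one, ← mul_assoc, mul_nonsing_inv _ hdet, one_mul]
  rw [hUV, step1, det_mul, ← Matrix.mul_assoc, Matrix.det_one_add_mul_comm, hVW]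
  have h2x2 : (1 : Matrix (Fin 2) (Fin 2) ℝ) + !![-a⁻¹ * a, -a⁻¹ * b; b⁻¹ * b, b⁻¹ * c]
      = !![1 + -a⁻¹ * a, -a⁻¹ * b; b⁻¹ * b, 1 + b⁻¹ * c] := by
    rw [Matrix.one_fin_two]
    ext i j
    fin_cases i <;> fin_cases j <;> simp
  rw [h2x2, det_fin_two_of]
  field_simp
  ring

open Matrix in
private lemma pd_bfgs_update {n : ℕ} {B : Matrix (Fin n) (Fin n) ℝ} (hB : B.PosDef)
    (s y : Fin n → ℝ) (hb : 0 < s ⬝ᵥ y) :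
    (B - (s ⬝ᵥ B *ᵥ s)⁻¹ • vecMulVec (B *ᵥ s) (B *ᵥ s) + (s ⬝ᵥ y)⁻¹ • vecMulVec y y).PosDef := by
  have hs : s ≠ 0 := by
    rintro rfl
    simp at hb
  have hsym : Bᵀ = B := by
    have := hB.1
    rwa [Matrix.IsHermitian, conjTranspose_eq_transpose_of_trivial] at this
  have ha : 0 < s ⬝ᵥ B *ᵥ s := by simpa using hB.dotProduct_mulVec_pos hs
  refine Matrix.PosDef.of_dotProduct_mulVec_pos ?_ ?_
  · rw [Matrix.IsHermitian, conjTranspose_eq_transpose_of_trivial]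
    ext i j
    simp [Matrix.transpose_apply, Matrix.sub_apply, Matrix.add_apply, vecMulVec_apply,
      Matrix.smul_apply, smul_eq_mul]
    have hBji : B j i = B i j := by
      rw [← congrFun (congrFun hsym i) j, transpose_apply]
    rw [hBji]
    ring
  · intro x hx
    have hswap : ∀ u v : Fin n → ℝ, u ⬝ᵥ B *ᵥ v = v ⬝ᵥ B *ᵥ u := by
      intro u v
      rw [dotProduct_mulVec, ← mulVec_transpose, hsym, dotProduct_comm]
    have expand : (star x) ⬝ᵥ ((B - (s ⬝ᵥ B *ᵥ s)⁻¹ • vecMulVec (B *ᵥ s) (B *ᵥ s)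
        + (s ⬝ᵥ y)⁻¹ • vecMulVec y y) *ᵥ x)
        = x ⬝ᵥ B *ᵥ x - (s ⬝ᵥ B *ᵥ s)⁻¹ * ((B *ᵥ s) ⬝ᵥ x) ^ 2 + (s ⬝ᵥ y)⁻¹ * (y ⬝ᵥ x) ^ 2 := by
      rw [star_trivial, add_mulVec, sub_mulVec, dotProduct_add, dotProduct_sub,
        smul_mulVec, smul_mulVec, dotProduct_smul, dotProduct_smul,
        dot_vecMulVec_dot, dot_vecMulVec_dot, smul_eq_mul, smul_eq_mul]
    rw [expand]
    set a := s ⬝ᵥ B *ᵥ s with ha'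
    set c := (x ⬝ᵥ B *ᵥ s) / a with hc
    set z := x - c • s with hz
    have hBsx : (B *ᵥ s) ⬝ᵥ x = x ⬝ᵥ B *ᵥ s := by
      rw [dotProduct_comm]
    have hkey : x ⬝ᵥ B *ᵥ x - a⁻¹ * ((B *ᵥ s) ⬝ᵥ x) ^ 2 = z ⬝ᵥ B *ᵥ z := by
      rw [hz, hBsx]
      rw [sub_dotProduct, mulVec_sub, dotProduct_sub, dotProduct_sub, mulVec_smul,
        dotProduct_smul, smul_dotProduct, smul_dotProduct, dotProduct_smul,
        smul_eq_mul, smul_eq_mul, smul_eq_mul, smul_eq_mul]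
      rw [hswap s x, hc]
      field_simp
      ring
    by_cases hzz : z = 0
    · have hxc : x = c • s := by rwa [hz, sub_eq_zero] at hzz
      have hcne : c ≠ 0 := by
        intro hc0
        rw [hc0, zero_smul] at hxc
        exact hx hxc
      have hyx : y ⬝ᵥ x = c * (s ⬝ᵥ y) := by
        rw [hxc, dotProduct_smul, smul_eq_mul, dotProduct_comm]
      rw [hkey, hzz]
      simp only [zero_dotProduct]
      rw [hyx]
      have : (s ⬝ᵥ y)⁻¹ * (c * (s ⬝ᵥ y)) ^ 2 = c ^ 2 * (s ⬝ᵥ y) := by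
        field_simp
      rw [this]
      positivity
    · have h1 : 0 < z ⬝ᵥ B *ᵥ z := by simpa using hB.dotProduct_mulVec_pos hzz
      have h2 : 0 ≤ (s ⬝ᵥ y)⁻¹ * (y ⬝ᵥ x) ^ 2 := by positivity
      rw [hkey] at *
      linarith

open Matrix in
private lemma quad_le_of_eigen {n : ℕ} {B : Matrix (Fin n) (Fin n) ℝ} (hB : B.IsHermitian)
    {T : ℝ} (hT : ∀ i, hB.eigenvalues i ≤ T) (x : Fin n → ℝ) :
    x ⬝ᵥ B *ᵥ x ≤ T * (x ⬝ᵥ x) := by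
  set U : Matrix (Fin n) (Fin n) ℝ := (hB.eigenvectorUnitary : Matrix (Fin n) (Fin n) ℝ)
  have hUU : U * star U = 1 := (Matrix.mem_unitaryGroup_iff).mp hB.eigenvectorUnitary.2
  have hspec : B = U * diagonal (RCLike.ofReal ∘ hB.eigenvalues) * star U := hB.spectral_theorem
  have hstar : (star U)ᴴ = U := by
    rw [Matrix.star_eq_conjTranspose, conjTranspose_conjTranspose]
  have h1 : (diagonal (fun i => T - hB.eigenvalues i) : Matrix (Fin n) (Fin n) ℝ)
      = T • 1 - diagonal (RCLike.ofReal ∘ hB.eigenvalues) := by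
    ext i j
    rcases eq_or_ne i j with rfl | hij
    · simp [Matrix.sub_apply, Matrix.smul_apply, Matrix.one_apply_eq]
    · simp [Matrix.diagonal_apply_ne _ hij, Matrix.sub_apply, Matrix.smul_apply,
        Matrix.one_apply_ne hij]
  have hdiag : (star U)ᴴ * diagonal (fun i => T - hB.eigenvalues i) * (star U)
      = T • (1 : Matrix (Fin n) (Fin n) ℝ) - B := by
    rw [hstar, h1, Matrix.mul_sub, Matrix.sub_mul, Matrix.mul_smul, mul_one, Matrix.smul_mul,
      hUU, ← hspec]
  have hPSD : (T • (1 : Matrix (Fin n) (Fin n) ℝ) - B).PosSemidef := by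
    rw [← hdiag]
    exact (Matrix.PosSemidef.diagonal (fun i => sub_nonneg.mpr (hT i))).conjTranspose_mul_mul_same
      (star U)
  have := hPSD.dotProduct_mulVec_nonneg x
  rw [star_trivial, sub_mulVec, dotProduct_sub, smul_mulVec, one_mulVec,
    dotProduct_smul, smul_eq_mul] at this
  linarith

private lemma inner_eq_dot {n : ℕ} (v w : EuclideanSpace ℝ (Fin n)) :
    ⟪v, w⟫ = (v : Fin n → ℝ) ⬝ᵥ (w : Fin n → ℝ) := by
  simp [PiLp.inner_apply, dotProduct, mul_comm]

/-- **Determinant lower bound for the regularized L-BFGS matrices.** Starting from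
`B⁽⁰⁾ = (1/γ + μ) I` and performing `m` BFGS updates with pairs `(s_l, ŷ_l)` satisfying
`s_lᵀ ŷ_l ≥ (M₁ + μ)‖s_l‖²`, if the largest eigenvalue of each intermediate matrix
`B⁽ˡ⁾` (`l = 0, …, m−1`) is at most `T`, then
`det(B⁽ᵐ⁾) ≥ (1/γ + μ)ⁿ ((M₁ + μ)/T)ᵐ`. -/
theorem regularized_lbfgs_det_lower_bound (n m : ℕ) (hn : 1 ≤ n) (hm : 1 ≤ m)
    (μ γ M₁ T : ℝ) (hμ : 0 < μ) (hγ : 0 < γ) (hM₁ : 0 < M₁) (hT : 0 < T)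
    (s yhat : ℕ → EuclideanSpace ℝ (Fin n))
    (hs : ∀ l < m, s l ≠ 0)
    (hsyhat : ∀ l < m, (M₁ + μ) * ‖s l‖ ^ 2 ≤ ⟪s l, yhat l⟫)
    (Bseq : ℕ → Matrix (Fin n) (Fin n) ℝ)
    (hB0 : Bseq 0 = (1 / γ + μ) • (1 : Matrix (Fin n) (Fin n) ℝ))
    (hrec : ∀ l < m, Bseq (l + 1) =
      Bseq l
        - (⟪s l, Matrix.toEuclideanLin (Bseq l) (s l)⟫)⁻¹ •
            Matrix.vecMulVec (Matrix.toEuclideanLin (Bseq l) (s l))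
              (Matrix.toEuclideanLin (Bseq l) (s l))
        + (⟪s l, yhat l⟫)⁻¹ • Matrix.vecMulVec (yhat l) (yhat l))
    (heig : ∀ l < m, ∀ (hherm : (Bseq l).IsHermitian), ∀ i : Fin n,
      hherm.eigenvalues i ≤ T) :
    (1 / γ + μ) ^ n * ((M₁ + μ) / T) ^ m ≤ (Bseq m).det := by
  have hc : 0 < 1 / γ + μ := by positivity
  have hMμ : 0 < M₁ + μ := by positivity
  have main : ∀ l, l ≤ m →
      (Bseq l).PosDef ∧ (1 / γ + μ) ^ n * ((M₁ + μ) / T) ^ l ≤ (Bseq l).det := by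
    intro l
    induction l with
    | zero =>
      intro _
      constructor
      · rw [hB0]
        refine Matrix.PosDef.of_dotProduct_mulVec_pos ?_ ?_
        · rw [Matrix.IsHermitian]
          simp [Matrix.conjTranspose_smul]
        · intro x hx
          have hxx : (0 : ℝ) < x ⬝ᵥ x := by
            simpa using Matrix.dotProduct_star_self_pos_iff.mpr hx
          have : star x ⬝ᵥ (((1 / γ + μ) • (1 : Matrix (Fin n) (Fin n) ℝ)) *ᵥ x)
              = (1 / γ + μ) * (x ⬝ᵥ x) := by
            rw [star_trivial, Matrix.smul_mulVec, Matrix.one_mulVec,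
              dotProduct_smul, smul_eq_mul]
          rw [this]
          positivity
      · rw [hB0, pow_zero, mul_one, Matrix.det_smul, Matrix.det_one, mul_one,
          Fintype.card_fin]
    | succ l ih =>
      intro hl1
      have hl : l < m := hl1
      obtain ⟨hPD, hdet⟩ := ih (le_of_lt hl)
      set Sv : Fin n → ℝ := (s l : Fin n → ℝ) with hSv
      set Yv : Fin n → ℝ := (yhat l : Fin n → ℝ) with hYv
      have hs0 : Sv ≠ 0 := fun h => hs l hl ((WithLp.ofLp_eq_zero 2).mp h)
      have hnorm : ‖s l‖ ^ 2 = Sv ⬝ᵥ Sv := by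
        rw [← real_inner_self_eq_norm_sq, inner_eq_dot]
      have hbv : (M₁ + μ) * (Sv ⬝ᵥ Sv) ≤ Sv ⬝ᵥ Yv := by
        have := hsyhat l hl
        rwa [hnorm, inner_eq_dot] at this
      have hSS : 0 < Sv ⬝ᵥ Sv := by
        simpa using Matrix.dotProduct_star_self_pos_iff.mpr hs0
      have hbpos : 0 < Sv ⬝ᵥ Yv := lt_of_lt_of_le (by positivity) hbv
      have hapos : 0 < Sv ⬝ᵥ (Bseq l) *ᵥ Sv := by simpa using hPD.dotProduct_mulVec_pos hs0
      have ha_le : Sv ⬝ᵥ (Bseq l) *ᵥ Sv ≤ T * (Sv ⬝ᵥ Sv) :=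
        quad_le_of_eigen hPD.1 (heig l hl hPD.1) Sv
      have hEL : (Matrix.toEuclideanLin (Bseq l) (s l) : Fin n → ℝ) = (Bseq l) *ᵥ Sv := rfl
      have hIP : ⟪s l, Matrix.toEuclideanLin (Bseq l) (s l)⟫ = Sv ⬝ᵥ ((Bseq l) *ᵥ Sv) := by
        rw [inner_eq_dot, hEL]
      have hIP2 : ⟪s l, yhat l⟫ = Sv ⬝ᵥ Yv := inner_eq_dot _ _
      have hrecM : Bseq (l + 1) = Bseq l
          - (Sv ⬝ᵥ (Bseq l) *ᵥ Sv)⁻¹ • Matrix.vecMulVec ((Bseq l) *ᵥ Sv) ((Bseq l) *ᵥ Sv)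
          + (Sv ⬝ᵥ Yv)⁻¹ • Matrix.vecMulVec Yv Yv := by
        rw [hrec l hl, hIP, hIP2]
        rfl
      have hsym : (Bseq l)ᵀ = Bseq l := by
        have := hPD.1
        rwa [Matrix.IsHermitian, Matrix.conjTranspose_eq_transpose_of_trivial] at this
      have hdetpos : 0 < (Bseq l).det := hPD.det_pos
      have hdetstep : (Bseq (l + 1)).det
          = (Bseq l).det * ((Sv ⬝ᵥ Yv) / (Sv ⬝ᵥ (Bseq l) *ᵥ Sv)) := by
        rw [hrecM]
        exact det_bfgs_update (Bseq l) hsym (IsUnit.mk0 _ (ne_of_gt hdetpos)) Sv Yv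
          (ne_of_gt hapos) (ne_of_gt hbpos)
      constructor
      · rw [hrecM]
        exact pd_bfgs_update hPD Sv Yv hbpos
      · rw [hdetstep, pow_succ, ← mul_assoc]
        have hratio : (M₁ + μ) / T ≤ (Sv ⬝ᵥ Yv) / (Sv ⬝ᵥ (Bseq l) *ᵥ Sv) := by
          rw [div_le_div_iff₀ hT hapos]
          nlinarith [hbv, ha_le, hSS, hMμ.le, hT.le]
        have hrnn : 0 ≤ (M₁ + μ) / T := by positivity
        exact mul_le_mul hdet hratio hrnn hdetpos.le
  exact (main m le_rfl).2
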